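/- Let α, β, a, b > 0 and k, l ∈ ℕ with αβ = 2al. Then for every t ∈ ℝ, the composition of triangle waveforms satisfies T_l(T_k(t; α, β); a, b) = T_{2kl}(t; a/β, bβ). -/

import Mathlib

open Real
open scoped BigOperators

/-- The triangle function `T(t; α, β)`: equals `βt` on `[0, α]`, `2αβ - βt` on `(α, 2α]`,
and `0` otherwise. -/
noncomputable def tri (α β t : ℝ) : ℝ :=
  if 0 ≤ t ∧ t ≤ α then β * t
  else if α < t ∧ t ≤ 2 * α then 2 * α * β - β * t
  else 0

/-- The triangle waveform `T_k(t; α, β) = Σ_{i=-k+1}^{k} T(t - 2α(i-1); α, β)`. -/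
noncomputable def triWave (k : ℕ) (α β t : ℝ) : ℝ :=
  ∑ i ∈ Finset.Icc (-(k : ℤ) + 1) (k : ℤ), tri α β (t - 2 * α * ((i : ℝ) - 1))



noncomputable def per (α β t : ℝ) : ℝ := tri α β (2 * α * Int.fract (t / (2 * α)))

lemma tri_eq1 {α β t : ℝ} (h0 : 0 ≤ t) (h1 : t ≤ α) : tri α β t = β * t := by
  unfold tri; rw [if_pos ⟨h0, h1⟩]

lemma tri_eq2 {α β t : ℝ} (h0 : α < t) (h1 : t ≤ 2 * α) : tri α β t = 2 * α * β - β * t := by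
  unfold tri
  rw [if_neg (by rintro ⟨_, h⟩; linarith), if_pos ⟨h0, h1⟩]

lemma tri_nonneg {α β : ℝ} (hβ : 0 ≤ β) (t : ℝ) : 0 ≤ tri α β t := by
  unfold tri; split_ifs with h1 h2
  · nlinarith [h1.1]
  · nlinarith [h2.1, h2.2]
  · exact le_refl 0

lemma tri_le {α β : ℝ} (hα : 0 ≤ α) (hβ : 0 ≤ β) (t : ℝ) : tri α β t ≤ α * β := by
  unfold tri; split_ifs with h1 h2
  · nlinarith [h1.1, h1.2]
  · nlinarith [h2.1, h2.2]
  · positivity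

lemma tri_zero_of_neg {α β t : ℝ} (hα : 0 < α) (ht : t < 0) : tri α β t = 0 := by
  unfold tri; split_ifs with h1 h2 <;> [linarith [h1.1]; linarith [h2.1]; rfl]

lemma tri_zero_of_ge {α β t : ℝ} (hα : 0 < α) (ht : 2 * α ≤ t) : tri α β t = 0 := by
  unfold tri; split_ifs with h1 h2
  · linarith [h1.2]
  · have : t = 2 * α := le_antisymm h2.2 ht
    subst this; ring
  · rfl

lemma tri_symm {α β t : ℝ} (hα : 0 < α) (h0 : 0 ≤ t) (h2 : t ≤ 2 * α) :
    tri α β (2 * α - t) = tri α β t := by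
  rcases lt_or_ge t α with h | h
  · rw [tri_eq2 (by linarith) (by linarith), tri_eq1 h0 (by linarith)]; ring
  · rcases eq_or_lt_of_le h with h' | h'
    · rw [← h', show 2 * α - α = α by ring]
    · rw [tri_eq1 (by linarith) (by linarith), tri_eq2 h' h2]; ring

lemma per_nonneg {α β : ℝ} (hβ : 0 ≤ β) (t : ℝ) : 0 ≤ per α β t := tri_nonneg hβ _

lemma per_le {α β : ℝ} (hα : 0 ≤ α) (hβ : 0 ≤ β) (t : ℝ) : per α β t ≤ α * β := tri_le hα hβ _

lemma per_add_int_mul {α β : ℝ} (hα : 0 < α) (t : ℝ) (m : ℤ) :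
    per α β (t + 2 * α * m) = per α β t := by
  unfold per
  rw [show (t + 2 * α * m) / (2 * α) = t / (2 * α) + m by field_simp,
    Int.fract_add_intCast]

lemma per_neg {α β : ℝ} (hα : 0 < α) (t : ℝ) : per α β (-t) = per α β t := by
  unfold per
  rw [show -t / (2 * α) = -(t / (2 * α)) by ring]
  rcases eq_or_ne (Int.fract (t / (2 * α))) 0 with h | h
  · rw [h, Int.fract_neg_eq_zero.mpr h]
  · have h2 : Int.fract (-(t / (2 * α))) = 1 - Int.fract (t / (2 * α)) := Int.fract_neg h
    have hf0 := Int.fract_nonneg (t / (2 * α))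
    have hf1 := Int.fract_lt_one (t / (2 * α))
    rw [h2, show 2 * α * (1 - Int.fract (t / (2 * α)))
        = 2 * α - 2 * α * Int.fract (t / (2 * α)) by ring]
    exact tri_symm hα (by positivity) (by nlinarith)

lemma tri_scale {a b β : ℝ} (hβ : 0 < β) (x : ℝ) : tri (a / β) (b * β) (x / β) = tri a b x := by
  have e1 : (0 ≤ x / β) ↔ (0 ≤ x) := by rw [le_div_iff₀ hβ]; simp
  have e2 : (x / β ≤ a / β) ↔ (x ≤ a) := div_le_div_iff_of_pos_right hβ
  have e3 : (a / β < x / β) ↔ (a < x) := div_lt_div_iff_of_pos_right hβ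
  have e4 : (x / β ≤ 2 * (a / β)) ↔ (x ≤ 2 * a) := by
    rw [show 2 * (a / β) = 2 * a / β by ring]; exact div_le_div_iff_of_pos_right hβ
  unfold tri
  simp only [e1, e2, e3, e4]
  split_ifs with h1 h2
  · field_simp
  · field_simp
  · rfl

lemma per_scale {a b β : ℝ} (ha : 0 < a) (hβ : 0 < β) (t : ℝ) :
    per (a / β) (b * β) t = per a b (β * t) := by
  unfold per
  rw [show t / (2 * (a / β)) = β * t / (2 * a) by field_simp]
  rw [show 2 * (a / β) * Int.fract (β * t / (2 * a))
      = (2 * a * Int.fract (β * t / (2 * a))) / β by field_simp]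
  exact tri_scale hβ _


lemma per_comp {α β a b : ℝ} (hα : 0 < α) (hβ : 0 < β) (ha : 0 < a)
    (l : ℕ) (h : α * β = 2 * a * (l : ℝ)) (t : ℝ) :
    per a b (per α β t) = per a b (β * t) := by
  set n := ⌊t / (2 * α)⌋ with hn
  set u := 2 * α * Int.fract (t / (2 * α)) with hu
  have harg : u = t - 2 * α * (n : ℝ) := by
    rw [hu, hn, Int.fract]; field_simp
  have hu0 : 0 ≤ u := by
    have := Int.fract_nonneg (t / (2 * α)); rw [hu]; positivity
  have hu2 : u < 2 * α := by
    have := Int.fract_lt_one (t / (2 * α)); rw [hu]; nlinarith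
  have hβt : β * t = β * u + 2 * a * (((2 * l * n : ℤ)) : ℝ) := by
    push_cast
    linear_combination (2 * (n : ℝ)) * h - β * harg
  have hper : per α β t = tri α β u := rfl
  rw [hper]
  rcases le_or_gt u α with hc | hc
  · rw [tri_eq1 hu0 hc, hβt, per_add_int_mul ha]
  · rw [tri_eq2 hc hu2.le]
    rw [show 2 * α * β - β * u = -(β * u) + 2 * a * (((2 * l : ℤ)) : ℝ) by
      push_cast; linear_combination 2 * h]
    rw [per_add_int_mul ha, per_neg ha, hβt, per_add_int_mul ha]

lemma triWave_eq {α β : ℝ} (hα : 0 < α) (k : ℕ) (t : ℝ) :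
    triWave k α β t = if -(2 * α * k) ≤ t ∧ t < 2 * α * k then per α β t else 0 := by
  unfold triWave
  split_ifs with hc
  · set n := ⌊t / (2 * α)⌋ with hn
    have hfl : (n : ℝ) ≤ t / (2 * α) := Int.floor_le _
    have hfl2 : t / (2 * α) < (n : ℝ) + 1 := Int.lt_floor_add_one _
    have h1 : 2 * α * (n : ℝ) ≤ t := by
      rw [mul_comm]; exact (le_div_iff₀ (by positivity)).mp hfl
    have h2 : t < 2 * α * ((n : ℝ) + 1) := by
      rw [mul_comm]; exact (div_lt_iff₀ (by positivity)).mp hfl2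
    have hnk1 : -(k : ℤ) ≤ n := by
      rw [hn]; apply Int.le_floor.mpr
      rw [le_div_iff₀ (by positivity)]; push_cast; nlinarith [hc.1]
    have hnk2 : n < (k : ℤ) := by
      rw [hn]; apply Int.floor_lt.mpr
      rw [div_lt_iff₀ (by positivity)]; push_cast; nlinarith [hc.2]
    rw [Finset.sum_eq_single (n + 1)]
    · unfold per
      congr 1
      push_cast
      rw [Int.fract]
      field_simp
      rw [← hn]; ring
    · intro i hi hne
      simp only [Finset.mem_Icc] at hi
      rcases lt_or_gt_of_ne hne with hlt | hgt
      · have hile : (i : ℝ) ≤ (n : ℝ) := by exact_mod_cast Int.lt_add_one_iff.mp hlt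
        apply tri_zero_of_ge hα
        have hp : 2 * α * (i : ℝ) ≤ 2 * α * (n : ℝ) :=
          mul_le_mul_of_nonneg_left hile (by positivity)
        linarith
      · have hige' : n + 2 ≤ i := by omega
        have hige : (n : ℝ) + 2 ≤ (i : ℝ) := by exact_mod_cast hige'
        apply tri_zero_of_neg hα
        have hp : 2 * α * ((n : ℝ) + 2) ≤ 2 * α * (i : ℝ) :=
          mul_le_mul_of_nonneg_left hige (by positivity)
        linarith
    · intro hmem
      exact absurd (Finset.mem_Icc.mpr ⟨by omega, by omega⟩) hmem
  · apply Finset.sum_eq_zero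
    intro i hi
    simp only [Finset.mem_Icc] at hi
    push_neg at hc
    have hi1 : -(k : ℝ) + 1 ≤ (i : ℝ) := by exact_mod_cast hi.1
    have hi2 : (i : ℝ) ≤ (k : ℝ) := by exact_mod_cast hi.2
    rcases lt_or_ge t (-(2 * α * k)) with hlt | hge
    · apply tri_zero_of_neg hα
      have hp : 2 * α * (-(k : ℝ)) ≤ 2 * α * ((i : ℝ) - 1) :=
        mul_le_mul_of_nonneg_left (by linarith) (by positivity)
      linarith
    · have hge2 : 2 * α * k ≤ t := hc hge
      apply tri_zero_of_ge hα
      have hp : 2 * α * ((i : ℝ) - 1) ≤ 2 * α * ((k : ℝ) - 1) :=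
        mul_le_mul_of_nonneg_left (by linarith) (by positivity)
      linarith

/-- **Composition of triangle waveforms (frequency multiplication).** If `αβ = 2al`, then
for every `t ∈ ℝ`, `T_l(T_k(t; α, β); a, b) = T_{2kl}(t; a/β, bβ)`. -/
theorem triWave_comp (α β a b : ℝ) (hα : 0 < α) (hβ : 0 < β) (ha : 0 < a) (hb : 0 < b)
    (k l : ℕ) (h : α * β = 2 * a * (l : ℝ)) (t : ℝ) :
    triWave l a b (triWave k α β t) = triWave (2 * k * l) (a / β) (b * β) t := by
  have hl : 0 < (l : ℝ) := by nlinarith [mul_pos hα hβ]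
  have houter : ∀ S : ℝ, 0 ≤ S → S ≤ 2 * a * (l : ℝ) → triWave l a b S = per a b S := by
    intro S h0 h1
    rw [triWave_eq ha]
    rcases lt_or_eq_of_le h1 with hlt | heq
    · rw [if_pos ⟨by nlinarith, hlt⟩]
    · rw [if_neg (by rintro ⟨_, hlt⟩; rw [← heq] at hlt; exact absurd hlt (lt_irrefl _)), heq]
      unfold per
      rw [show (2 * a * (l : ℝ)) / (2 * a) = ((l : ℤ) : ℝ) by push_cast; field_simp,
        Int.fract_intCast, mul_zero, tri_eq1 le_rfl ha.le, mul_zero]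
  rw [triWave_eq hα k t, triWave_eq (show 0 < a / β by positivity) (2 * k * l) t]
  have hbound : 2 * (a / β) * ((2 * k * l : ℕ) : ℝ) = 2 * α * (k : ℝ) := by
    push_cast; field_simp; linear_combination (-1 : ℝ) * (k : ℝ) * h
  rw [hbound]
  split_ifs with hcond
  · rw [houter (per α β t) (per_nonneg hβ.le t) (h ▸ per_le hα.le hβ.le t)]
    rw [per_comp hα hβ ha l h t]
    exact (per_scale ha hβ t).symm
  · rw [houter 0 le_rfl (by positivity)]
    unfold per
    rw [show (0 : ℝ) / (2 * a) = 0 by simp, Int.fract_zero, mul_zero,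
      tri_eq1 le_rfl ha.le, mul_zero]
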